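/- arXiv:2104.14137 — 2 statements merged into one kernel-verified Lean document; each statement's English description precedes it below -/
import Mathlib

section
/- Let Φ be a Schwartz function on R^{2n}, Q a cube in R^n with center c_Q and side length ℓ(Q), and Q* the concentric dilate of Q with ℓ(Q*) = 100√n ℓ(Q). For k ∈ Z let Φ_k(y) := 2^{2kn} Φ(2^k y), and define Θ^Q_k(y1,z1) := ∫_{x ∈ (Q*)^c} ∫_{y2 ∈ R^n} |Φ_k(x − y1 − z1, y2)| dy2 dx. Then for all γ, μ ∈ Z with 2^γ ℓ(Q) ≥ 1 and μ ≥ 0, all y1 ∈ Q, and all z1 with |z1| ≤ 2^{−γ+1}, one has Θ^Q_{μ+γ}(y1,z1) ≲ 2^{−μ} (2^γ ℓ(Q))^{−1}. -/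
open MeasureTheory Filter
open scoped ENNReal Topology

noncomputable section

/-- `ℝⁿ` as a Euclidean space. -/
abbrev ESp (n : ℕ) := EuclideanSpace ℝ (Fin n)

/-- `ℝⁿ × ℝⁿ`, representing `ℝ^{2n}`. -/
abbrev PSp (n : ℕ) := ESp n × ESp n

/-- The (closed) cube in `ℝⁿ` with center `c` and side length `ℓ`. -/
def cube (n : ℕ) (c : ESp n) (ℓ : ℝ) : Set (ESp n) := {x | ∀ i, |x i - c i| ≤ ℓ / 2}

/-- The `L¹`-dilation `Φ_k(y) = 2^{2kn} Φ(2^k y)` of a function on `ℝ^{2n}`. -/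
def dilR {n : ℕ} (Φ : PSp n → ℝ) (k : ℤ) (y : PSp n) : ℝ :=
  ((2:ℝ) ^ k) ^ (2 * n) * Φ ((2:ℝ) ^ k • y)

/-- `Θ^Q_k(y₁,z₁) = ∫_{(Q*)^c} ∫ |Φ_k(x-y₁-z₁, y₂)| dy₂ dx`, where `Q*` is the
concentric dilate of `Q` with `ℓ(Q*) = 100√n ℓ(Q)`. -/
def ΘΦ {n : ℕ} (Φ : PSp n → ℝ) (k : ℤ) (c : ESp n) (ℓ : ℝ) (y1 z1 : ESp n) : ℝ :=
  ∫ x in (cube n c (100 * Real.sqrt n * ℓ))ᶜ, ∫ y2 : ESp n,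
    |dilR Φ k (x - y1 - z1, y2)|

lemma abs_coord_le_norm {n : ℕ} (v : ESp n) (i : Fin n) : |v i| ≤ ‖v‖ := by
  rw [EuclideanSpace.norm_eq, ← Real.sqrt_sq_eq_abs]
  apply Real.sqrt_le_sqrt
  have : v i ^ 2 = ‖v i‖ ^ 2 := by rw [Real.norm_eq_abs, sq_abs]
  rw [this]
  exact Finset.single_le_sum (f := fun j => ‖v j‖ ^ 2) (fun j _ => by positivity)
    (Finset.mem_univ i)

lemma norm_sub_le_of_cube {n : ℕ} {c : ESp n} {ℓ : ℝ} (hℓ : 0 ≤ ℓ) {y : ESp n}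
    (hy : y ∈ cube n c ℓ) : ‖y - c‖ ≤ Real.sqrt n * (ℓ / 2) := by
  rw [EuclideanSpace.norm_eq]
  have h1 : ∑ i, ‖(y - c) i‖ ^ 2 ≤ (n : ℝ) * (ℓ / 2) ^ 2 := by
    calc ∑ i, ‖(y - c) i‖ ^ 2 ≤ ∑ _i : Fin n, (ℓ / 2) ^ 2 := by
          apply Finset.sum_le_sum
          intro i _
          have h2 : ‖(y - c) i‖ = |y i - c i| := by
            simp [PiLp.sub_apply, Real.norm_eq_abs]
          rw [h2]
          exact pow_le_pow_left₀ (abs_nonneg _) (hy i) 2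
      _ = (n : ℝ) * (ℓ / 2) ^ 2 := by simp [mul_comm]
  calc Real.sqrt (∑ i, ‖(y - c) i‖ ^ 2) ≤ Real.sqrt ((n : ℝ) * (ℓ / 2) ^ 2) :=
        Real.sqrt_le_sqrt h1
    _ = Real.sqrt n * (ℓ / 2) := by
        rw [Real.sqrt_mul (by positivity), Real.sqrt_sq (by positivity)]

lemma norm_sub_ge_of_not_cube {n : ℕ} {c : ESp n} {r : ℝ} {x : ESp n}
    (hx : x ∉ cube n c r) : r / 2 ≤ ‖x - c‖ := by
  simp only [cube, Set.mem_setOf_eq, not_forall] at hx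
  obtain ⟨i, hi⟩ := hx
  push_neg at hi
  calc r / 2 ≤ |x i - c i| := hi.le
    _ = |(x - c) i| := by simp [PiLp.sub_apply]
    _ ≤ ‖x - c‖ := abs_coord_le_norm _ _

lemma inv_pow_le_of_le_two_mul {a b : ℝ} (ha : 0 < a) (hb : 0 < b) (hab : a ≤ 2 * b) (m : ℕ) :
    (b ^ m)⁻¹ ≤ 2 ^ m * (a ^ m)⁻¹ := by
  have h1 : a ^ m ≤ (2 * b) ^ m := pow_le_pow_left₀ ha.le hab m
  have h2 : (0:ℝ) < a ^ m := by positivity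
  calc (b ^ m)⁻¹ = 2 ^ m * ((2 * b) ^ m)⁻¹ := by
        rw [mul_pow]; field_simp
    _ ≤ 2 ^ m * (a ^ m)⁻¹ := by
        apply mul_le_mul_of_nonneg_left _ (by positivity)
        exact inv_anti₀ h2 h1

lemma inv_pow_succ_le {t c : ℝ} (hc : 0 < c) (h : c ≤ t) (m : ℕ) :
    (t ^ (m + 1))⁻¹ ≤ c⁻¹ * (t ^ m)⁻¹ := by
  have ht : 0 < t := hc.trans_le h
  rw [pow_succ, mul_inv]
  rw [mul_comm]
  exact mul_le_mul_of_nonneg_right (inv_anti₀ hc h) (by positivity)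

set_option maxHeartbeats 1000000 in
/-- estimate (4.11): if `2^γ ℓ(Q) ≥ 1` and `μ ≥ 0`, then for
`y₁ ∈ Q` and `|z₁| ≤ 2^{-γ+1}` one has `Θ^Q_{μ+γ} ≲ 2^{-μ} (2^γ ℓ(Q))⁻¹`. -/
theorem stmt17 (n : ℕ) (hn : 1 ≤ n) (Φ : SchwartzMap (PSp n) ℝ) :
    ∃ C : ℝ, 0 < C ∧
      ∀ (γ μ : ℤ), 0 ≤ μ → ∀ (c : ESp n) (ℓ : ℝ), 0 < ℓ →
        1 ≤ (2:ℝ) ^ γ * ℓ → ∀ y1 ∈ cube n c ℓ, ∀ z1 : ESp n,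
          ‖z1‖ ≤ (2:ℝ) ^ (-γ + 1) →
          ΘΦ (⇑Φ) (μ + γ) c ℓ y1 z1 ≤ C * ((2:ℝ) ^ μ)⁻¹ * ((2:ℝ) ^ γ * ℓ)⁻¹ := by
  have hn1 : (1:ℝ) ≤ Real.sqrt n := by
    rw [show (1:ℝ) = Real.sqrt 1 by simp]
    exact Real.sqrt_le_sqrt (by exact_mod_cast hn)
  -- Schwartz decay constant
  obtain ⟨D, hD0, hD⟩ : ∃ D, 0 ≤ D ∧ ∀ p : PSp n, (1 + ‖p‖) ^ (2*n+3) * |Φ p| ≤ D := by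
    refine ⟨2 ^ (2*n+3) *
      (Finset.Iic (2*n+3, 0)).sup (fun m => SchwartzMap.seminorm ℝ m.1 m.2) Φ, ?_, ?_⟩
    · positivity
    · intro p
      have := Φ.one_add_le_sup_seminorm_apply (𝕜 := ℝ) (m := (2*n+3, 0)) le_rfl le_rfl p
      simpa [norm_iteratedFDeriv_zero, Real.norm_eq_abs] using this
  -- the integrable decaying envelope
  set h : ESp n → ℝ := fun v => ((1 + ‖v‖) ^ (n+1))⁻¹ with hh_def
  have hint : Integrable h := by
    have h1 : ((Module.finrank ℝ (ESp n)):ℝ) < (n:ℝ) + 1 := by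
      rw [finrank_euclideanSpace_fin]; linarith
    have h2 := integrable_one_add_norm (E := ESp n) (μ := volume) h1
    refine h2.congr (Eventually.of_forall fun v => ?_)
    show ((1:ℝ) + ‖v‖) ^ (-((n:ℝ)+1)) = ((1 + ‖v‖) ^ (n+1))⁻¹
    rw [Real.rpow_neg (by positivity),
      show ((n:ℝ)+1) = ((n+1 : ℕ):ℝ) by push_cast; ring, Real.rpow_natCast]
  set Cn := ∫ v, h v with hCn_def
  have hCn0 : 0 ≤ Cn := integral_nonneg fun v => by positivity
  -- pointwise product bound
  have hprod : ∀ (a b : ESp n),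
      |Φ (a, b)| ≤ D * ((1 + ‖a‖) ^ (n+2))⁻¹ * ((1 + ‖b‖) ^ (n+1))⁻¹ := by
    intro a b
    have hpa : (0:ℝ) < 1 + ‖a‖ := by positivity
    have hpb : (0:ℝ) < 1 + ‖b‖ := by positivity
    have hle : (1 + ‖a‖) ^ (n+2) * (1 + ‖b‖) ^ (n+1) ≤ (1 + ‖((a,b) : PSp n)‖) ^ (2*n+3) := by
      have h1 : 1 + ‖a‖ ≤ 1 + ‖((a,b) : PSp n)‖ := by
        have := norm_fst_le ((a,b) : PSp n); simpa using by linarith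
      have h2 : 1 + ‖b‖ ≤ 1 + ‖((a,b) : PSp n)‖ := by
        have := norm_snd_le ((a,b) : PSp n); simpa using by linarith
      calc (1 + ‖a‖) ^ (n+2) * (1 + ‖b‖) ^ (n+1)
          ≤ (1 + ‖((a,b) : PSp n)‖) ^ (n+2) * (1 + ‖((a,b) : PSp n)‖) ^ (n+1) :=
            mul_le_mul (pow_le_pow_left₀ hpa.le h1 _) (pow_le_pow_left₀ hpb.le h2 _)
              (by positivity) (by positivity)
        _ = (1 + ‖((a,b) : PSp n)‖) ^ (2*n+3) := by rw [← pow_add]; ring_nf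
    have h2 : |Φ (a,b)| * ((1 + ‖a‖) ^ (n+2) * (1 + ‖b‖) ^ (n+1)) ≤ D := by
      calc |Φ (a,b)| * ((1 + ‖a‖) ^ (n+2) * (1 + ‖b‖) ^ (n+1))
          ≤ |Φ (a,b)| * (1 + ‖((a,b) : PSp n)‖) ^ (2*n+3) :=
            mul_le_mul_of_nonneg_left hle (abs_nonneg _)
        _ ≤ D := by rw [mul_comm]; exact hD _
    calc |Φ (a,b)| = |Φ (a,b)| * ((1 + ‖a‖) ^ (n+2) * (1 + ‖b‖) ^ (n+1)) *
          (((1 + ‖a‖) ^ (n+2))⁻¹ * ((1 + ‖b‖) ^ (n+1))⁻¹) := by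
          field_simp
      _ ≤ D * (((1 + ‖a‖) ^ (n+2))⁻¹ * ((1 + ‖b‖) ^ (n+1))⁻¹) :=
          mul_le_mul_of_nonneg_right h2 (by positivity)
      _ = D * ((1 + ‖a‖) ^ (n+2))⁻¹ * ((1 + ‖b‖) ^ (n+1))⁻¹ := by ring
  have hDCn : (0:ℝ) ≤ D * Cn := mul_nonneg hD0 hCn0
  have hCbig : (0:ℝ) ≤ D * Cn * 2 ^ (n+2) * Cn :=
    mul_nonneg (mul_nonneg hDCn (by positivity)) hCn0
  refine ⟨D * Cn * 2 ^ (n+2) * Cn + 1, by linarith, ?_⟩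
  intro γ μ hμ c ℓ hℓ hγℓ y1 hy1 z1 hz1
  set k : ℤ := μ + γ with hk_def
  set s : ℝ := (2:ℝ) ^ k with hs_def
  have hs : 0 < s := zpow_pos (by norm_num) k
  have h2γ : (0:ℝ) < (2:ℝ) ^ γ := zpow_pos (by norm_num) γ
  have h2μ : (1:ℝ) ≤ (2:ℝ) ^ μ := one_le_zpow₀ (by norm_num) hμ
  -- scaling of the envelope integral
  have hscale_int : Integrable (fun v : ESp n => h (s • v)) := hint.comp_smul hs.ne'
  have hscale : (∫ v : ESp n, h (s • v)) = (s ^ n)⁻¹ * Cn := by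
    rw [Measure.integral_comp_smul volume h s, finrank_euclideanSpace_fin, smul_eq_mul,
      abs_of_nonneg (inv_nonneg.2 (pow_nonneg hs.le n))]
  -- inner integral bound
  have hinner : ∀ u : ESp n, (∫ y2 : ESp n, |dilR (⇑Φ) k (u, y2)|)
      ≤ s ^ n * (D * Cn) * ((1 + ‖s • u‖) ^ (n+2))⁻¹ := by
    intro u
    have hpt : ∀ y2 : ESp n, |dilR (⇑Φ) k (u, y2)|
        ≤ s ^ (2*n) * (D * ((1 + ‖s • u‖) ^ (n+2))⁻¹) * h (s • y2) := by
      intro y2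
      have h1 : dilR (⇑Φ) k (u, y2) = s ^ (2*n) * Φ (s • u, s • y2) := by
        rw [dilR]; rfl
      rw [h1, abs_mul, abs_of_nonneg (pow_nonneg hs.le (2*n))]
      have h2 := hprod (s • u) (s • y2)
      calc s ^ (2*n) * |Φ (s • u, s • y2)|
          ≤ s ^ (2*n) * (D * ((1 + ‖s • u‖) ^ (n+2))⁻¹ * ((1 + ‖s • y2‖) ^ (n+1))⁻¹) :=
            mul_le_mul_of_nonneg_left h2 (pow_nonneg hs.le (2*n))
        _ = s ^ (2*n) * (D * ((1 + ‖s • u‖) ^ (n+2))⁻¹) * h (s • y2) := by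
            rw [hh_def]; ring
    calc (∫ y2 : ESp n, |dilR (⇑Φ) k (u, y2)|)
        ≤ ∫ y2 : ESp n, s ^ (2*n) * (D * ((1 + ‖s • u‖) ^ (n+2))⁻¹) * h (s • y2) :=
          integral_mono_of_nonneg (Eventually.of_forall fun y2 => abs_nonneg _)
            (hscale_int.const_mul _) (Eventually.of_forall hpt)
      _ = s ^ (2*n) * (D * ((1 + ‖s • u‖) ^ (n+2))⁻¹) * ((s ^ n)⁻¹ * Cn) := by
          rw [integral_const_mul, hscale]
      _ = s ^ n * (D * Cn) * ((1 + ‖s • u‖) ^ (n+2))⁻¹ := by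
          have h3 : s ^ (2*n) = s ^ n * s ^ n := by rw [two_mul, pow_add]
          have h4 : (s ^ n) ≠ 0 := (pow_pos hs n).ne'
          rw [h3]; field_simp
  -- geometry
  have hy1c : ‖y1 - c‖ ≤ Real.sqrt n * (ℓ / 2) := norm_sub_le_of_cube hℓ.le hy1
  have hz1' : ‖z1‖ ≤ 2 * ℓ := by
    have hinv : ((2:ℝ) ^ γ)⁻¹ ≤ ℓ := by
      rw [inv_le_iff_one_le_mul₀ h2γ]
      linarith [hγℓ]
    have : ((2:ℝ)) ^ (-γ + 1) = ((2:ℝ) ^ γ)⁻¹ * 2 := by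
      rw [zpow_add₀ (by norm_num : (2:ℝ) ≠ 0), zpow_neg, zpow_one]
    rw [this] at hz1
    linarith
  set S : Set (ESp n) := (cube n c (100 * Real.sqrt n * ℓ))ᶜ with hS_def
  have hSmeas : MeasurableSet S := by
    apply MeasurableSet.compl
    have : IsClosed (cube n c (100 * Real.sqrt n * ℓ)) := by
      have : cube n c (100 * Real.sqrt n * ℓ)
          = ⋂ i, {x : ESp n | |x i - c i| ≤ (100 * Real.sqrt n * ℓ) / 2} := by
        ext x; simp [cube, Set.mem_iInter]
      rw [this]
      refine isClosed_iInter fun i => ?_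
      have hcont : Continuous fun x : ESp n => |x i - c i| :=
        ((continuous_apply i).comp (EuclideanSpace.equiv (Fin n) ℝ).continuous
          |>.sub continuous_const).abs
      exact isClosed_le hcont continuous_const
    exact this.measurableSet
  -- pointwise bound off the cube
  set g : ESp n → ℝ :=
    fun x => s ^ n * (D * Cn) * 2 ^ (n+2) * (s * ℓ)⁻¹ * h (s • (x - c)) with hg_def
  have hg_int : Integrable g := by
    have : Integrable (fun x : ESp n => h (s • (x - c))) :=
      (hint.comp_smul hs.ne').comp_sub_right c
    exact this.const_mul _
  have hg_nonneg : ∀ x, 0 ≤ g x := fun x => by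
    simp only [hg_def, hh_def]
    have : (0:ℝ) ≤ ((1 + ‖s • (x - c)‖) ^ (n+1))⁻¹ := by positivity
    have h5 : (0:ℝ) ≤ (s * ℓ)⁻¹ := inv_nonneg.2 (mul_pos hs hℓ).le
    nlinarith [mul_nonneg (mul_nonneg (mul_nonneg (pow_nonneg hs.le n) hDCn)
      (by positivity : (0:ℝ) ≤ (2:ℝ) ^ (n+2))) h5]
  have hgeo : ∀ x ∈ S, s ^ n * (D * Cn) * ((1 + ‖s • (x - y1 - z1)‖) ^ (n+2))⁻¹ ≤ g x := by
    intro x hx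
    have hxc : 50 * Real.sqrt n * ℓ ≤ ‖x - c‖ := by
      have := norm_sub_ge_of_not_cube (hx : x ∉ cube n c (100 * Real.sqrt n * ℓ))
      linarith
    have hdist : ‖x - c‖ / 2 ≤ ‖x - y1 - z1‖ := by
      have heq : x - y1 - z1 = (x - c) - (y1 - c) - z1 := by abel
      have h1 : ‖(x - c) - (y1 - c) - z1‖ ≥ ‖x - c‖ - ‖y1 - c‖ - ‖z1‖ := by
        have t1 := norm_sub_norm_le ((x - c) - (y1 - c)) z1
        have t2 := norm_sub_norm_le (x - c) (y1 - c)
        have t3 := norm_sub_le ((x - c) - (y1 - c)) z1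
        linarith [norm_sub_le (x - c) (y1 - c),
          norm_le_insert' (x - c) (y1 - c)]
      rw [heq]
      nlinarith [norm_nonneg z1, norm_nonneg (y1 - c), hℓ.le]
    have ht1 : (0:ℝ) < 1 + s * ‖x - c‖ := by
      nlinarith [norm_nonneg (x - c), hs.le, mul_nonneg hs.le (norm_nonneg (x - c))]
    have ht2 : (0:ℝ) < 1 + s * ‖x - y1 - z1‖ := by
      nlinarith [mul_nonneg hs.le (norm_nonneg (x - y1 - z1))]
    have hsmul1 : ‖s • (x - y1 - z1)‖ = s * ‖x - y1 - z1‖ := by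
      rw [norm_smul, Real.norm_eq_abs, abs_of_pos hs]
    have hsmul2 : ‖s • (x - c)‖ = s * ‖x - c‖ := by
      rw [norm_smul, Real.norm_eq_abs, abs_of_pos hs]
    have step1 : ((1 + s * ‖x - y1 - z1‖) ^ (n+2))⁻¹
        ≤ 2 ^ (n+2) * ((1 + s * ‖x - c‖) ^ (n+2))⁻¹ := by
      apply inv_pow_le_of_le_two_mul ht1 ht2
      nlinarith [mul_le_mul_of_nonneg_left hdist hs.le]
    have hsl : s * ℓ ≤ 1 + s * ‖x - c‖ := by
      have : ℓ ≤ ‖x - c‖ := by nlinarith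
      nlinarith [mul_le_mul_of_nonneg_left this hs.le]
    have step2 : ((1 + s * ‖x - c‖) ^ (n+2))⁻¹
        ≤ (s * ℓ)⁻¹ * ((1 + s * ‖x - c‖) ^ (n+1))⁻¹ := by
      exact inv_pow_succ_le (mul_pos hs hℓ) hsl (n+1)
    have hgx : g x = s ^ n * (D * Cn) * 2 ^ (n+2) * (s * ℓ)⁻¹
        * ((1 + s * ‖x - c‖) ^ (n+1))⁻¹ := by
      simp only [hg_def, hh_def, hsmul2]
    rw [hgx, hsmul1]
    calc s ^ n * (D * Cn) * ((1 + s * ‖x - y1 - z1‖) ^ (n+2))⁻¹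
        ≤ s ^ n * (D * Cn) * (2 ^ (n+2) * ((1 + s * ‖x - c‖) ^ (n+2))⁻¹) :=
          mul_le_mul_of_nonneg_left step1 (mul_nonneg (pow_nonneg hs.le n) hDCn)
      _ ≤ s ^ n * (D * Cn) * (2 ^ (n+2) * ((s * ℓ)⁻¹ * ((1 + s * ‖x - c‖) ^ (n+1))⁻¹)) := by
          apply mul_le_mul_of_nonneg_left _ (mul_nonneg (pow_nonneg hs.le n) hDCn)
          exact mul_le_mul_of_nonneg_left step2 (by positivity)
      _ = s ^ n * (D * Cn) * 2 ^ (n+2) * (s * ℓ)⁻¹ * ((1 + s * ‖x - c‖) ^ (n+1))⁻¹ := by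
          ring
  -- put everything together
  have hmain : ΘΦ (⇑Φ) k c ℓ y1 z1 ≤ ∫ x in S, g x := by
    rw [ΘΦ]
    apply integral_mono_of_nonneg
    · exact Eventually.of_forall fun x => integral_nonneg fun y2 => abs_nonneg _
    · exact hg_int.restrict
    · refine (ae_restrict_iff' hSmeas).2 (Eventually.of_forall fun x hx => ?_)
      exact le_trans (hinner (x - y1 - z1)) (hgeo x hx)
  have hSle : (∫ x in S, g x) ≤ ∫ x, g x :=
    setIntegral_le_integral hg_int (Eventually.of_forall hg_nonneg)
  have hgval : (∫ x, g x) = D * Cn * 2 ^ (n+2) * Cn * (s * ℓ)⁻¹ := by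
    rw [hg_def]
    rw [integral_const_mul]
    rw [integral_sub_right_eq_self (fun x => h (s • x)) c, hscale]
    have hsn : (s:ℝ) ^ n ≠ 0 := (pow_pos hs n).ne'
    have hsl0 : s * ℓ ≠ 0 := (mul_pos hs hℓ).ne'
    field_simp
  have hfinal : ΘΦ (⇑Φ) k c ℓ y1 z1 ≤ D * Cn * 2 ^ (n+2) * Cn * (s * ℓ)⁻¹ := by
    rw [← hgval]; exact hmain.trans hSle
  have hsplit : (s * ℓ)⁻¹ = ((2:ℝ) ^ μ)⁻¹ * ((2:ℝ) ^ γ * ℓ)⁻¹ := by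
    rw [hs_def, hk_def, zpow_add₀ (by norm_num : (2:ℝ) ≠ 0)]
    rw [mul_assoc, mul_inv]
  rw [hsplit] at hfinal
  refine hfinal.trans ?_
  have hpos : (0:ℝ) < ((2:ℝ) ^ μ)⁻¹ * ((2:ℝ) ^ γ * ℓ)⁻¹ := by positivity
  have : D * Cn * 2 ^ (n+2) * Cn ≤ D * Cn * 2 ^ (n+2) * Cn + 1 := by linarith
  calc D * Cn * 2 ^ (n+2) * Cn * (((2:ℝ) ^ μ)⁻¹ * ((2:ℝ) ^ γ * ℓ)⁻¹)
      ≤ (D * Cn * 2 ^ (n+2) * Cn + 1) * (((2:ℝ) ^ μ)⁻¹ * ((2:ℝ) ^ γ * ℓ)⁻¹) :=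
        mul_le_mul_of_nonneg_right this hpos.le
    _ = (D * Cn * 2 ^ (n+2) * Cn + 1) * ((2:ℝ) ^ μ)⁻¹ * ((2:ℝ) ^ γ * ℓ)⁻¹ := by ring
end
end

section
/- Let Φ be a Schwartz function on R^{2n}, k ∈ Z, Φ_k(y) := 2^{2kn} Φ(2^k y), Q a cube in R^n with center c_Q and side length ℓ(Q), L > n, and 0 < δ < 1. Define V^L_k(x,y1,c_Q) := ∫_0^1 2^{kn}(1 + 2^k|x − t y1 − (1−t)c_Q|)^{−L} dt, W^L_k(x,y1,c_Q) := 2^{kn}(1 + 2^k|x − y1|)^{−L} + 2^{kn}(1 + 2^k|x − c_Q|)^{−L}, and U^{L,δ}_k := (V^L_k)^δ (W^L_k)^{1−δ}. Then for all γ, μ ∈ Z with μ ≥ 0, y1 ∈ Q, and x, z1, y2, z2 ∈ R^n: |Φ_{μ+γ}(x − y1 − z1, x − y2 − z2) − Φ_{μ+γ}(x − c_Q − z1, x − y2 − z2)| ≲_{L,δ} 2^{δμ} (2^γ ℓ(Q))^δ U^{L,δ}_{μ+γ}(x − z1, y1, c_Q) · 2^{(μ+γ)n}(1 + 2^{μ+γ}|x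 − y2 − z2|)^{−L}; moreover ‖U^{L,δ}_{μ+γ}(·, y1, c_Q)‖_{L^1(R^n)} ≲ 1. -/
open MeasureTheory Filter
open scoped ENNReal Topology

noncomputable section

/-- `V^L_k(x, y₁, c_Q) = ∫₀¹ 2^{kn} (1 + 2^k|x - t y₁ - (1-t) c_Q|)^{-L} dt`. -/
def Vk {n : ℕ} (L : ℝ) (k : ℤ) (x y1 c : ESp n) : ℝ :=
  ∫ t in Set.Icc (0:ℝ) 1,
    ((2:ℝ) ^ k) ^ n * (1 + (2:ℝ) ^ k * ‖x - t • y1 - (1 - t) • c‖) ^ (-L)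

/-- `W^L_k(x, y₁, c_Q) = 2^{kn}(1 + 2^k|x-y₁|)^{-L} + 2^{kn}(1 + 2^k|x-c_Q|)^{-L}`. -/
def Wk {n : ℕ} (L : ℝ) (k : ℤ) (x y1 c : ESp n) : ℝ :=
  ((2:ℝ) ^ k) ^ n * (1 + (2:ℝ) ^ k * ‖x - y1‖) ^ (-L) +
    ((2:ℝ) ^ k) ^ n * (1 + (2:ℝ) ^ k * ‖x - c‖) ^ (-L)

/-- `U^{L,δ}_k = (V^L_k)^δ (W^L_k)^{1-δ}`. -/
def Uk {n : ℕ} (L δ : ℝ) (k : ℤ) (x y1 c : ESp n) : ℝ :=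
  Vk L k x y1 c ^ δ * Wk L k x y1 c ^ (1 - δ)

/-! ### Auxiliary lemmas -/

/-- The integrand of `Vk`, as a function of `x` and `t`. -/
def Fkt {n : ℕ} (L : ℝ) (k : ℤ) (y1 c : ESp n) (x : ESp n) (t : ℝ) : ℝ :=
  ((2:ℝ) ^ k) ^ n * (1 + (2:ℝ) ^ k * ‖x - t • y1 - (1 - t) • c‖) ^ (-L)

lemma vk_eq_integral_Fkt {n : ℕ} (L : ℝ) (k : ℤ) (x y1 c : ESp n) :
    Vk L k x y1 c = ∫ t in Set.Icc (0:ℝ) 1, Fkt L k y1 c x t := rfl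

lemma fkt_nonneg {n : ℕ} (L : ℝ) (k : ℤ) (y1 c x : ESp n) (t : ℝ) :
    0 ≤ Fkt L k y1 c x t := by
  have h1 : (0:ℝ) < (2:ℝ) ^ k := by positivity
  exact mul_nonneg (by positivity) (Real.rpow_nonneg (by positivity) _)

lemma vk_nonneg {n : ℕ} (L : ℝ) (k : ℤ) (x y1 c : ESp n) : 0 ≤ Vk L k x y1 c :=
  integral_nonneg fun t => fkt_nonneg L k y1 c x t

lemma wk_nonneg {n : ℕ} (L : ℝ) (k : ℤ) (x y1 c : ESp n) : 0 ≤ Wk L k x y1 c := by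
  have h1 : (0:ℝ) < (2:ℝ) ^ k := by positivity
  exact add_nonneg (mul_nonneg (by positivity) (Real.rpow_nonneg (by positivity) _))
    (mul_nonneg (by positivity) (Real.rpow_nonneg (by positivity) _))

lemma uk_nonneg {n : ℕ} (L δ : ℝ) (k : ℤ) (x y1 c : ESp n) : 0 ≤ Uk L δ k x y1 c :=
  mul_nonneg (Real.rpow_nonneg (vk_nonneg L k x y1 c) _)
    (Real.rpow_nonneg (wk_nonneg L k x y1 c) _)

/-- Schwartz decay of the `i`-th derivative on a product space, with a decay factor in
each variable separately. -/
lemma schwartz_decay_prod {n : ℕ} (Φ : SchwartzMap (PSp n) ℝ) {L : ℝ} (hL : 0 < L) (i : ℕ) :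
    ∃ C : ℝ, 0 ≤ C ∧ ∀ w : PSp n,
      ‖iteratedFDeriv ℝ i (⇑Φ) w‖ ≤ C * ((1 + ‖w.1‖) ^ (-L) * (1 + ‖w.2‖) ^ (-L)) := by
  set m : ℕ := ⌈L⌉₊ with hm
  refine ⟨2 ^ (2*m) * (Finset.Iic (2*m, i)).sup (fun p => SchwartzMap.seminorm ℝ p.1 p.2) Φ,
    mul_nonneg (by positivity) (apply_nonneg _ _), fun w => ?_⟩
  have h1 := SchwartzMap.one_add_le_sup_seminorm_apply (𝕜 := ℝ) (m := (2*m, i))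
    le_rfl le_rfl Φ w
  have ha : (0:ℝ) ≤ ‖w.1‖ := norm_nonneg _
  have hb : (0:ℝ) ≤ ‖w.2‖ := norm_nonneg _
  have hfst : ‖w.1‖ ≤ ‖w‖ := norm_fst_le w
  have hsnd : ‖w.2‖ ≤ ‖w‖ := norm_snd_le w
  have hD : (0:ℝ) < (1 + ‖w.1‖) ^ L * (1 + ‖w.2‖) ^ L :=
    mul_pos (Real.rpow_pos_of_pos (by linarith) _) (Real.rpow_pos_of_pos (by linarith) _)
  have key1 : (1 + ‖w.1‖) ^ L ≤ (1 + ‖w‖) ^ m := by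
    calc (1 + ‖w.1‖) ^ L ≤ (1 + ‖w.1‖) ^ (m:ℝ) :=
          Real.rpow_le_rpow_of_exponent_le (by linarith) (Nat.le_ceil L)
      _ = (1 + ‖w.1‖) ^ m := Real.rpow_natCast _ m
      _ ≤ (1 + ‖w‖) ^ m := pow_le_pow_left₀ (by linarith) (by linarith) m
  have key2 : (1 + ‖w.2‖) ^ L ≤ (1 + ‖w‖) ^ m := by
    calc (1 + ‖w.2‖) ^ L ≤ (1 + ‖w.2‖) ^ (m:ℝ) :=
          Real.rpow_le_rpow_of_exponent_le (by linarith) (Nat.le_ceil L)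
      _ = (1 + ‖w.2‖) ^ m := Real.rpow_natCast _ m
      _ ≤ (1 + ‖w‖) ^ m := pow_le_pow_left₀ (by linarith) (by linarith) m
  have hDle : (1 + ‖w.1‖) ^ L * (1 + ‖w.2‖) ^ L ≤ (1 + ‖w‖) ^ (2*m) := by
    calc (1 + ‖w.1‖) ^ L * (1 + ‖w.2‖) ^ L ≤ (1 + ‖w‖) ^ m * (1 + ‖w‖) ^ m :=
          mul_le_mul key1 key2 (Real.rpow_nonneg (by linarith) _) (by positivity)
      _ = (1 + ‖w‖) ^ (2*m) := by rw [← pow_add]; ring_nf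
  rw [Real.rpow_neg (by linarith), Real.rpow_neg (by linarith), ← mul_inv, ← div_eq_mul_inv,
    le_div_iff₀ hD]
  calc ‖iteratedFDeriv ℝ i (⇑Φ) w‖ * ((1 + ‖w.1‖) ^ L * (1 + ‖w.2‖) ^ L)
      ≤ ‖iteratedFDeriv ℝ i (⇑Φ) w‖ * (1 + ‖w‖) ^ (2*m) :=
        mul_le_mul_of_nonneg_left hDle (norm_nonneg _)
    _ = (1 + ‖w‖) ^ (2*m) * ‖iteratedFDeriv ℝ i (⇑Φ) w‖ := mul_comm _ _
    _ ≤ _ := h1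

/-- Scaling/translation invariance of the basic decay integral. -/
lemma integrable_integral_scaled {n : ℕ} {L : ℝ} (hL : (n:ℝ) < L) (k : ℤ) (a : ESp n) :
    Integrable (fun x : ESp n => ((2:ℝ)^k)^n * (1 + (2:ℝ)^k * ‖x - a‖) ^ (-L)) ∧
    ∫ x : ESp n, ((2:ℝ)^k)^n * (1 + (2:ℝ)^k * ‖x - a‖) ^ (-L)
      = ∫ u : ESp n, (1 + ‖u‖) ^ (-L) := by
  have hfr : (Module.finrank ℝ (ESp n) : ℝ) < L := by rw [finrank_euclideanSpace_fin]; exact hL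
  have hg : Integrable (fun u : ESp n => (1+‖u‖)^(-L)) := integrable_one_add_norm hfr
  have hs : (0:ℝ) < (2:ℝ)^k := by positivity
  have hrw : ∀ x : ESp n, (1 + ‖(2:ℝ)^k • (x - a)‖) ^ (-L)
      = (1 + (2:ℝ)^k * ‖x - a‖) ^ (-L) := by
    intro x; rw [norm_smul, Real.norm_eq_abs, abs_of_pos hs]
  constructor
  · have h1 : Integrable (fun x : ESp n => (1+‖(2:ℝ)^k • x‖)^(-L)) :=
      (integrable_comp_smul_iff volume (fun u : ESp n => (1+‖u‖)^(-L)) hs.ne').2 hg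
    have h2 : Integrable (fun x : ESp n => (1+‖(2:ℝ)^k • (x - a)‖)^(-L)) :=
      h1.comp_sub_right a
    have h3 : Integrable (fun x : ESp n =>
        ((2:ℝ)^k)^n * (1+‖(2:ℝ)^k • (x - a)‖)^(-L)) := h2.const_mul (((2:ℝ)^k)^n)
    exact h3.congr (ae_of_all _ fun x => by simp only [hrw])
  · calc ∫ x : ESp n, ((2:ℝ)^k)^n * (1 + (2:ℝ)^k * ‖x - a‖) ^ (-L)
        = ∫ x : ESp n, ((2:ℝ)^k)^n * (1 + ‖(2:ℝ)^k • (x - a)‖) ^ (-L) :=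
          integral_congr_ae (ae_of_all _ fun x => by simp only [hrw])
      _ = ((2:ℝ)^k)^n * ∫ x : ESp n, (1 + ‖(2:ℝ)^k • (x - a)‖) ^ (-L) :=
          integral_const_mul _ _
      _ = ((2:ℝ)^k)^n * ∫ x : ESp n, (1 + ‖(2:ℝ)^k • x‖) ^ (-L) := by
          rw [integral_sub_right_eq_self (fun x : ESp n => (1 + ‖(2:ℝ)^k • x‖) ^ (-L)) a]
      _ = ((2:ℝ)^k)^n *
          (|(((2:ℝ)^k) ^ Module.finrank ℝ (ESp n))⁻¹| • ∫ u : ESp n, (1 + ‖u‖) ^ (-L)) := by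
          rw [Measure.integral_comp_smul volume (fun u : ESp n => (1 + ‖u‖) ^ (-L)) ((2:ℝ)^k)]
      _ = ∫ u : ESp n, (1 + ‖u‖) ^ (-L) := by
          rw [finrank_euclideanSpace_fin, smul_eq_mul, abs_inv, abs_of_pos (by positivity),
            ← mul_assoc, mul_inv_cancel₀ (by positivity), one_mul]

lemma fkt_continuous {n : ℕ} (L : ℝ) (k : ℤ) (y1 c : ESp n) :
    Continuous fun p : ESp n × ℝ => Fkt L k y1 c p.1 p.2 := by
  have hs : (0:ℝ) < (2:ℝ)^k := by positivity
  have hnorm : Continuous fun p : ESp n × ℝ => ‖p.1 - p.2 • y1 - (1 - p.2) • c‖ :=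
    ((continuous_fst.sub (continuous_snd.smul continuous_const)).sub
      ((continuous_const.sub continuous_snd).smul continuous_const)).norm
  exact continuous_const.mul ((continuous_const.add (continuous_const.mul hnorm)).rpow_const
    (fun p => Or.inl (by simp only [Pi.add_apply, Pi.mul_apply]; positivity)))

lemma fkt_continuous_t {n : ℕ} (L : ℝ) (k : ℤ) (y1 c x : ESp n) :
    Continuous fun t : ℝ => Fkt L k y1 c x t := by
  have hs : (0:ℝ) < (2:ℝ)^k := by positivity
  have hnorm : Continuous fun t : ℝ => ‖x - t • y1 - (1 - t) • c‖ :=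
    ((continuous_const.sub (continuous_id.smul continuous_const)).sub
      ((continuous_const.sub continuous_id).smul continuous_const)).norm
  exact continuous_const.mul ((continuous_const.add (continuous_const.mul hnorm)).rpow_const
    (fun t => Or.inl (by simp only [Pi.add_apply, Pi.mul_apply]; positivity)))

set_option maxHeartbeats 1000000 in
/-- Integrability and `L¹` bound for `Vk`. -/
lemma vk_int {n : ℕ} {L : ℝ} (hL : (n:ℝ) < L) (hL0 : 0 < L) (k : ℤ) (y1 c : ESp n) :
    Integrable (fun x : ESp n => Vk L k x y1 c) ∧
    ∫ x : ESp n, Vk L k x y1 c ≤ ∫ u : ESp n, (1 + ‖u‖) ^ (-L) := by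
  have hs : (0:ℝ) < (2:ℝ)^k := by positivity
  have hF0 : ∀ (x : ESp n) (t : ℝ), 0 ≤ Fkt L k y1 c x t := fun x t => fkt_nonneg L k y1 c x t
  have hFcont := fkt_continuous L k y1 c
  have hFle : ∀ (x : ESp n) (t : ℝ), Fkt L k y1 c x t ≤ ((2:ℝ)^k)^n := by
    intro x t
    have h1 : (1 + (2:ℝ)^k * ‖x - t • y1 - (1 - t) • c‖) ^ (-L) ≤ 1 :=
      Real.rpow_le_one_of_one_le_of_nonpos (le_add_of_nonneg_right (by positivity)) (by linarith)
    calc Fkt L k y1 c x t ≤ ((2:ℝ)^k)^n * 1 := mul_le_mul_of_nonneg_left h1 (by positivity)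
      _ = ((2:ℝ)^k)^n := mul_one _
  have hVeq : ∀ x : ESp n, Vk L k x y1 c
      = (∫⁻ t in Set.Icc (0:ℝ) 1, ENNReal.ofReal (Fkt L k y1 c x t)).toReal := by
    intro x
    have hcx : Continuous fun t => Fkt L k y1 c x t := fkt_continuous_t L k y1 c x
    rw [vk_eq_integral_Fkt]
    exact integral_eq_lintegral_of_nonneg_ae (ae_of_all _ fun t => hF0 x t)
      hcx.aestronglyMeasurable
  have hvol : volume (Set.Icc (0:ℝ) 1) = 1 := by rw [Real.volume_Icc]; norm_num
  have hφle : ∀ x : ESp n, (∫⁻ t in Set.Icc (0:ℝ) 1, ENNReal.ofReal (Fkt L k y1 c x t))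
      ≤ ENNReal.ofReal (((2:ℝ)^k)^n) := by
    intro x
    calc (∫⁻ t in Set.Icc (0:ℝ) 1, ENNReal.ofReal (Fkt L k y1 c x t))
        ≤ ∫⁻ _ in Set.Icc (0:ℝ) 1, ENNReal.ofReal (((2:ℝ)^k)^n) :=
          lintegral_mono fun t => ENNReal.ofReal_le_ofReal (hFle x t)
      _ = ENNReal.ofReal (((2:ℝ)^k)^n) * volume (Set.Icc (0:ℝ) 1) := setLIntegral_const _ _
      _ = ENNReal.ofReal (((2:ℝ)^k)^n) := by rw [hvol, mul_one]
  have hφne : ∀ x : ESp n, (∫⁻ t in Set.Icc (0:ℝ) 1, ENNReal.ofReal (Fkt L k y1 c x t)) ≠ ⊤ :=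
    fun x => ((hφle x).trans_lt ENNReal.ofReal_lt_top).ne
  have hmeas_unc : Measurable fun p : ESp n × ℝ => ENNReal.ofReal (Fkt L k y1 c p.1 p.2) :=
    hFcont.measurable.ennreal_ofReal
  have hφmeas : Measurable fun x : ESp n =>
      ∫⁻ t in Set.Icc (0:ℝ) 1, ENNReal.ofReal (Fkt L k y1 c x t) :=
    Measurable.lintegral_prod_right' hmeas_unc
  have hinner : ∀ t : ℝ, ∫⁻ x : ESp n, ENNReal.ofReal (Fkt L k y1 c x t)
      = ENNReal.ofReal (∫ u : ESp n, (1 + ‖u‖) ^ (-L)) := by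
    intro t
    obtain ⟨hint, heq⟩ := integrable_integral_scaled hL k (t • y1 + (1 - t) • c)
    have hsub : ∀ x : ESp n, Fkt L k y1 c x t
        = ((2:ℝ)^k)^n * (1 + (2:ℝ)^k * ‖x - (t • y1 + (1 - t) • c)‖) ^ (-L) := by
      intro x; rw [Fkt, sub_sub]
    have hint' : Integrable (fun x => Fkt L k y1 c x t) :=
      hint.congr (ae_of_all _ fun x => (hsub x).symm)
    have heq' : ∫ x : ESp n, Fkt L k y1 c x t = ∫ u : ESp n, (1 + ‖u‖) ^ (-L) := by
      rw [← heq]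
      exact integral_congr_ae (ae_of_all _ fun x => hsub x)
    rw [← ofReal_integral_eq_lintegral_ofReal hint' (ae_of_all _ fun x => hF0 x t), heq']
  have hswap : ∫⁻ x : ESp n, (∫⁻ t in Set.Icc (0:ℝ) 1, ENNReal.ofReal (Fkt L k y1 c x t))
      = ENNReal.ofReal (∫ u : ESp n, (1 + ‖u‖) ^ (-L)) := by
    calc ∫⁻ x : ESp n, (∫⁻ t in Set.Icc (0:ℝ) 1, ENNReal.ofReal (Fkt L k y1 c x t))
        = ∫⁻ t in Set.Icc (0:ℝ) 1, ∫⁻ x : ESp n, ENNReal.ofReal (Fkt L k y1 c x t) :=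
          lintegral_lintegral_swap hmeas_unc.aemeasurable
      _ = ∫⁻ _ in Set.Icc (0:ℝ) 1, ENNReal.ofReal (∫ u : ESp n, (1 + ‖u‖) ^ (-L)) :=
          lintegral_congr fun t => hinner t
      _ = ENNReal.ofReal (∫ u : ESp n, (1 + ‖u‖) ^ (-L)) := by
          rw [setLIntegral_const, hvol, mul_one]
  have hVmeas : AEStronglyMeasurable (fun x : ESp n => Vk L k x y1 c) volume := by
    have : (fun x : ESp n => Vk L k x y1 c) = fun x =>
        (∫⁻ t in Set.Icc (0:ℝ) 1, ENNReal.ofReal (Fkt L k y1 c x t)).toReal := funext hVeq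
    rw [this]
    exact hφmeas.ennreal_toReal.aestronglyMeasurable
  have hofReal : ∀ x : ESp n, ENNReal.ofReal (Vk L k x y1 c)
      = ∫⁻ t in Set.Icc (0:ℝ) 1, ENNReal.ofReal (Fkt L k y1 c x t) := by
    intro x; rw [hVeq x, ENNReal.ofReal_toReal (hφne x)]
  have hfin : HasFiniteIntegral (fun x : ESp n => Vk L k x y1 c) volume := by
    rw [hasFiniteIntegral_iff_ofReal (ae_of_all _ fun x => vk_nonneg L k x y1 c)]
    rw [lintegral_congr hofReal, hswap]
    exact ENNReal.ofReal_lt_top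
  have hI0 : 0 ≤ ∫ u : ESp n, (1 + ‖u‖) ^ (-L) :=
    integral_nonneg fun u => Real.rpow_nonneg (by positivity) _
  refine ⟨⟨hVmeas, hfin⟩, le_of_eq ?_⟩
  rw [integral_eq_lintegral_of_nonneg_ae (ae_of_all _ fun x => vk_nonneg L k x y1 c) hVmeas,
    lintegral_congr hofReal, hswap, ENNReal.toReal_ofReal hI0]

/-- The norm bound coming from membership in a cube. -/
lemma cube_norm_le {n : ℕ} {c : ESp n} {ℓ : ℝ} (hℓ : 0 ≤ ℓ) {y : ESp n}
    (hy : y ∈ cube n c ℓ) : ‖y - c‖ ≤ Real.sqrt n * ℓ := by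
  have h : ‖y - c‖ ≤ Real.sqrt ((n:ℝ) * ℓ^2) := by
    rw [EuclideanSpace.norm_eq]
    apply Real.sqrt_le_sqrt
    calc ∑ i, ‖(y - c) i‖^2 ≤ ∑ _i : Fin n, ℓ^2 := by
          refine Finset.sum_le_sum fun i _ => ?_
          have h1 : ‖(y - c) i‖ ≤ ℓ := by
            have := hy i
            rw [show (y - c) i = y i - c i from by simp, Real.norm_eq_abs]
            linarith [this, half_le_self hℓ]
          exact pow_le_pow_left₀ (norm_nonneg _) h1 2
      _ = (n:ℝ) * ℓ^2 := by simp [Finset.sum_const, Finset.card_univ, nsmul_eq_mul]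
  calc ‖y - c‖ ≤ Real.sqrt ((n:ℝ) * ℓ^2) := h
    _ = Real.sqrt n * ℓ := by
        rw [Real.sqrt_mul (by positivity), Real.sqrt_sq hℓ]

/-- Interpolation between two bounds. -/
lemma interp_bound {d A B : ℝ} (hA0 : 0 ≤ A) (hB0 : 0 ≤ B) {δ : ℝ} (hδ0 : 0 ≤ δ)
    (hδ1 : δ ≤ 1) (hdA : |d| ≤ A) (hdB : |d| ≤ B) : |d| ≤ A ^ δ * B ^ (1 - δ) := by
  rcases eq_or_lt_of_le (abs_nonneg d) with h | h
  · rw [← h]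
    exact mul_nonneg (Real.rpow_nonneg hA0 _) (Real.rpow_nonneg hB0 _)
  · calc |d| = |d| ^ δ * |d| ^ (1 - δ) := by
          rw [← Real.rpow_add h, show δ + (1 - δ) = 1 from by ring, Real.rpow_one]
      _ ≤ A ^ δ * B ^ (1 - δ) :=
          mul_le_mul (Real.rpow_le_rpow (abs_nonneg d) hdA hδ0)
            (Real.rpow_le_rpow (abs_nonneg d) hdB (by linarith))
            (Real.rpow_nonneg (abs_nonneg d) _) (Real.rpow_nonneg hA0 _)

/-- The algebraic recombination of the interpolated bound. -/
lemma rpow_comb {δ : ℝ} {c₁ e v w g c₀ : ℝ}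
    (hc₁ : 0 ≤ c₁) (he : 0 ≤ e) (hv : 0 ≤ v) (hw : 0 ≤ w) (hg : 0 < g) (hc₀ : 0 ≤ c₀) :
    (c₁ * e * v * g) ^ δ * (c₀ * w * g) ^ (1-δ) =
      (c₁ * e) ^ δ * c₀ ^ (1-δ) * (v ^ δ * w ^ (1-δ)) * g := by
  rw [Real.mul_rpow (by positivity) hg.le, Real.mul_rpow (by positivity) hv,
    Real.mul_rpow (by positivity) hg.le, Real.mul_rpow hc₀ hw]
  have hgg : g ^ δ * g ^ (1-δ) = g := by
    rw [← Real.rpow_add hg, show δ + (1 - δ) = 1 from by ring, Real.rpow_one]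
  calc (c₁ * e) ^ δ * v ^ δ * g ^ δ * (c₀ ^ (1-δ) * w ^ (1-δ) * g ^ (1-δ))
      = (c₁ * e) ^ δ * c₀ ^ (1-δ) * (v ^ δ * w ^ (1-δ)) * (g ^ δ * g ^ (1-δ)) := by ring
    _ = (c₁ * e) ^ δ * c₀ ^ (1-δ) * (v ^ δ * w ^ (1-δ)) * g := by rw [hgg]

/-- The two basic estimates: the mean-value (`Vk`) bound and the crude (`Wk`) bound. -/
lemma key_est {n : ℕ} (Φ : SchwartzMap (PSp n) ℝ) {L : ℝ} (hL0 : 0 < L)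
    {C₀ C₁ : ℝ} (hC₀ : 0 ≤ C₀) (hC₁ : 0 ≤ C₁)
    (h0 : ∀ w : PSp n, |Φ w| ≤ C₀ * ((1 + ‖w.1‖) ^ (-L) * (1 + ‖w.2‖) ^ (-L)))
    (h1 : ∀ w : PSp n, ‖fderiv ℝ (⇑Φ) w‖ ≤ C₁ * ((1 + ‖w.1‖) ^ (-L) * (1 + ‖w.2‖) ^ (-L)))
    (k : ℤ) (y1 c a b : ESp n) :
    |dilR (⇑Φ) k (a - y1, b) - dilR (⇑Φ) k (a - c, b)| ≤
      C₁ * ((2:ℝ)^k * ‖y1 - c‖) * Vk L k a y1 c *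
        (((2:ℝ)^k)^n * (1 + (2:ℝ)^k * ‖b‖)^(-L)) ∧
    |dilR (⇑Φ) k (a - y1, b) - dilR (⇑Φ) k (a - c, b)| ≤
      C₀ * Wk L k a y1 c * (((2:ℝ)^k)^n * (1 + (2:ℝ)^k * ‖b‖)^(-L)) := by
  have hs : (0:ℝ) < (2:ℝ)^k := by positivity
  let g : ℝ → ESp n := fun t => a - t • y1 - (1 - t) • c
  let p : ℝ → PSp n := fun t => ((2:ℝ)^k • g t, (2:ℝ)^k • b)
  have hg1 : g 1 = a - y1 := by simp [g]
  have hg0 : g 0 = a - c := by simp [g]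
  have hnorm1 : ∀ t, ‖(p t).1‖ = (2:ℝ)^k * ‖g t‖ := by
    intro t; show ‖(2:ℝ)^k • g t‖ = _
    rw [norm_smul, Real.norm_eq_abs, abs_of_pos hs]
  have hnorm2 : ∀ t, ‖(p t).2‖ = (2:ℝ)^k * ‖b‖ := by
    intro t; show ‖(2:ℝ)^k • b‖ = _
    rw [norm_smul, Real.norm_eq_abs, abs_of_pos hs]
  have hd_eq : dilR (⇑Φ) k (a - y1, b) - dilR (⇑Φ) k (a - c, b)
      = ((2:ℝ)^k)^(2*n) * (Φ (p 1) - Φ (p 0)) := by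
    show _ = _ * (Φ ((2:ℝ)^k • g 1, (2:ℝ)^k • b) - Φ ((2:ℝ)^k • g 0, (2:ℝ)^k • b))
    rw [hg1, hg0]
    simp only [dilR, ← Prod.smul_mk, mul_sub]
  -- derivative of the path
  let v : PSp n := ((2:ℝ)^k • ((0:ESp n) - y1 - (-1:ℝ) • c), (0:ESp n))
  have hgder : ∀ t : ℝ, HasDerivAt g ((0:ESp n) - y1 - (-1:ℝ) • c) t := by
    intro t
    have h1' : HasDerivAt (fun t : ℝ => t • y1) ((1:ℝ) • y1) t :=
      (hasDerivAt_id t).smul_const y1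
    have h2' : HasDerivAt (fun t : ℝ => (1 - t) • c) ((0 - 1 : ℝ) • c) t :=
      ((hasDerivAt_const t (1:ℝ)).sub (hasDerivAt_id t)).smul_const c
    have h3' := ((hasDerivAt_const t a).sub h1').sub h2'
    exact h3'.congr_deriv (by simp)
  have hpder : ∀ t : ℝ, HasDerivAt p v t := fun t =>
    (HasDerivAt.prodMk ((hgder t).const_smul ((2:ℝ)^k)) (hasDerivAt_const t ((2:ℝ)^k • b)))
  have hvnorm : ‖v‖ ≤ (2:ℝ)^k * ‖y1 - c‖ := by
    have h1' : (0:ESp n) - y1 - (-1:ℝ) • c = c - y1 := by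
      rw [neg_one_smul]; abel
    show ‖((2:ℝ)^k • ((0:ESp n) - y1 - (-1:ℝ) • c), (0:ESp n))‖ ≤ _
    rw [Prod.norm_def]
    simp only [norm_zero]
    rw [h1', max_eq_left (norm_nonneg _), norm_smul, Real.norm_eq_abs, abs_of_pos hs,
      norm_sub_rev]
  have hFder : ∀ t : ℝ, HasDerivAt (fun t => Φ (p t)) ((fderiv ℝ (⇑Φ) (p t)) v) t := fun t =>
    (Φ.differentiableAt.hasFDerivAt).comp_hasDerivAt t (hpder t)
  have hcont_g : Continuous g :=
    (continuous_const.sub (continuous_id.smul continuous_const)).sub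
      ((continuous_const.sub continuous_id).smul continuous_const)
  have hcont_p : Continuous p := (hcont_g.const_smul ((2:ℝ)^k)).prodMk continuous_const
  have hcont_der : Continuous fun t => (fderiv ℝ (⇑Φ) (p t)) v :=
    Continuous.clm_apply (((Φ.smooth ⊤).continuous_fderiv (by simp)).comp hcont_p)
      continuous_const
  have hftc : Φ (p 1) - Φ (p 0) = ∫ t in (0:ℝ)..1, (fderiv ℝ (⇑Φ) (p t)) v := by
    rw [intervalIntegral.integral_eq_sub_of_hasDerivAt (fun t _ => hFder t)
      (hcont_der.intervalIntegrable 0 1)]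
  -- pointwise bound on the derivative
  have hK0 : 0 ≤ C₁ * ((2:ℝ)^k * ‖y1 - c‖) * (1 + (2:ℝ)^k * ‖b‖)^(-L) :=
    mul_nonneg (mul_nonneg hC₁ (by positivity)) (Real.rpow_nonneg (by positivity) _)
  have hbd : ∀ t : ℝ, ‖(fderiv ℝ (⇑Φ) (p t)) v‖ ≤
      (C₁ * ((2:ℝ)^k * ‖y1 - c‖) * (1 + (2:ℝ)^k * ‖b‖)^(-L)) *
        (1 + (2:ℝ)^k * ‖g t‖)^(-L) := by
    intro t
    calc ‖(fderiv ℝ (⇑Φ) (p t)) v‖ ≤ ‖fderiv ℝ (⇑Φ) (p t)‖ * ‖v‖ :=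
          ContinuousLinearMap.le_opNorm _ _
      _ ≤ (C₁ * ((1 + ‖(p t).1‖) ^ (-L) * (1 + ‖(p t).2‖) ^ (-L))) *
            ((2:ℝ)^k * ‖y1 - c‖) := by
          refine mul_le_mul (h1 (p t)) hvnorm (norm_nonneg _) ?_
          exact mul_nonneg hC₁ (mul_nonneg (Real.rpow_nonneg (by positivity) _)
            (Real.rpow_nonneg (by positivity) _))
      _ = (C₁ * ((2:ℝ)^k * ‖y1 - c‖) * (1 + (2:ℝ)^k * ‖b‖)^(-L)) *
            (1 + (2:ℝ)^k * ‖g t‖)^(-L) := by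
          rw [hnorm1, hnorm2]; ring
  have habs : |Φ (p 1) - Φ (p 0)| ≤ ∫ t in (0:ℝ)..1,
      (C₁ * ((2:ℝ)^k * ‖y1 - c‖) * (1 + (2:ℝ)^k * ‖b‖)^(-L)) *
        (1 + (2:ℝ)^k * ‖g t‖)^(-L) := by
    rw [hftc, ← Real.norm_eq_abs]
    refine (intervalIntegral.norm_integral_le_integral_norm (by norm_num : (0:ℝ) ≤ 1)).trans ?_
    have hcb : Continuous fun t : ℝ =>
        (C₁ * ((2:ℝ)^k * ‖y1 - c‖) * (1 + (2:ℝ)^k * ‖b‖)^(-L)) *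
          (1 + (2:ℝ)^k * ‖g t‖)^(-L) := by
      refine continuous_const.mul ?_
      exact (continuous_const.add (continuous_const.mul hcont_g.norm)).rpow_const
        (fun t => Or.inl (by simp only [Pi.add_apply, Pi.mul_apply]; positivity))
    refine intervalIntegral.integral_mono_on (by norm_num) ?_
      (hcb.intervalIntegrable 0 1) (fun t _ => hbd t)
    exact hcont_der.norm.intervalIntegrable 0 1
  have hint01 : ∫ t in (0:ℝ)..1,
      (C₁ * ((2:ℝ)^k * ‖y1 - c‖) * (1 + (2:ℝ)^k * ‖b‖)^(-L)) *
        (1 + (2:ℝ)^k * ‖g t‖)^(-L)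
      = (C₁ * ((2:ℝ)^k * ‖y1 - c‖) * (1 + (2:ℝ)^k * ‖b‖)^(-L)) *
        ∫ t in Set.Icc (0:ℝ) 1, (1 + (2:ℝ)^k * ‖g t‖)^(-L) := by
    rw [intervalIntegral.integral_const_mul,
      intervalIntegral.integral_of_le (by norm_num : (0:ℝ) ≤ 1),
      ← integral_Icc_eq_integral_Ioc]
  have hVkJ : Vk L k a y1 c = ((2:ℝ)^k)^n *
      ∫ t in Set.Icc (0:ℝ) 1, (1 + (2:ℝ)^k * ‖g t‖)^(-L) := by
    rw [← integral_const_mul]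
    rfl
  have hJ0 : 0 ≤ ∫ t in Set.Icc (0:ℝ) 1, (1 + (2:ℝ)^k * ‖g t‖)^(-L) :=
    integral_nonneg fun t => Real.rpow_nonneg (by positivity) _
  have hd_abs : |dilR (⇑Φ) k (a - y1, b) - dilR (⇑Φ) k (a - c, b)|
      = ((2:ℝ)^k)^(2*n) * |Φ (p 1) - Φ (p 0)| := by
    rw [hd_eq, abs_mul, abs_of_pos (by positivity)]
  constructor
  · -- mean value bound
    rw [hd_abs, hVkJ]
    calc ((2:ℝ)^k)^(2*n) * |Φ (p 1) - Φ (p 0)|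
        ≤ ((2:ℝ)^k)^(2*n) * ((C₁ * ((2:ℝ)^k * ‖y1 - c‖) * (1 + (2:ℝ)^k * ‖b‖)^(-L)) *
            ∫ t in Set.Icc (0:ℝ) 1, (1 + (2:ℝ)^k * ‖g t‖)^(-L)) := by
          refine mul_le_mul_of_nonneg_left ?_ (by positivity)
          exact habs.trans (le_of_eq hint01)
      _ = C₁ * ((2:ℝ)^k * ‖y1 - c‖) *
            (((2:ℝ)^k)^n * ∫ t in Set.Icc (0:ℝ) 1, (1 + (2:ℝ)^k * ‖g t‖)^(-L)) *
            (((2:ℝ)^k)^n * (1 + (2:ℝ)^k * ‖b‖)^(-L)) := by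
          rw [two_mul, pow_add]; ring
  · -- crude bound
    rw [hd_abs]
    have hb1 : |Φ (p 1)| ≤ C₀ * ((1 + (2:ℝ)^k * ‖a - y1‖) ^ (-L) *
        (1 + (2:ℝ)^k * ‖b‖) ^ (-L)) := by
      have := h0 (p 1)
      rwa [hnorm1, hnorm2, hg1] at this
    have hb0 : |Φ (p 0)| ≤ C₀ * ((1 + (2:ℝ)^k * ‖a - c‖) ^ (-L) *
        (1 + (2:ℝ)^k * ‖b‖) ^ (-L)) := by
      have := h0 (p 0)
      rwa [hnorm1, hnorm2, hg0] at this
    calc ((2:ℝ)^k)^(2*n) * |Φ (p 1) - Φ (p 0)|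
        ≤ ((2:ℝ)^k)^(2*n) * (|Φ (p 1)| + |Φ (p 0)|) :=
          mul_le_mul_of_nonneg_left (abs_sub _ _) (by positivity)
      _ ≤ ((2:ℝ)^k)^(2*n) * (C₀ * ((1 + (2:ℝ)^k * ‖a - y1‖) ^ (-L) *
              (1 + (2:ℝ)^k * ‖b‖) ^ (-L))
            + C₀ * ((1 + (2:ℝ)^k * ‖a - c‖) ^ (-L) * (1 + (2:ℝ)^k * ‖b‖) ^ (-L))) :=
          mul_le_mul_of_nonneg_left (add_le_add hb1 hb0) (by positivity)
      _ = C₀ * Wk L k a y1 c * (((2:ℝ)^k)^n * (1 + (2:ℝ)^k * ‖b‖)^(-L)) := by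
          simp only [Wk]
          rw [two_mul, pow_add]; ring

/-- estimates (5.7) and (5.8): the averaged difference
estimate for `Φ_{μ+γ}` and the uniform `L¹` bound for `U^{L,δ}_{μ+γ}`. -/
theorem stmt18 (n : ℕ) (hn : 1 ≤ n) (Φ : SchwartzMap (PSp n) ℝ)
    (L : ℝ) (hL : (n : ℝ) < L) (δ : ℝ) (hδ0 : 0 < δ) (hδ1 : δ < 1) :
    ∃ C : ℝ, 0 < C ∧
      (∀ (γ μ : ℤ), 0 ≤ μ → ∀ (c : ESp n) (ℓ : ℝ), 0 < ℓ → ∀ y1 ∈ cube n c ℓ,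
        ∀ x z1 y2 z2 : ESp n,
          |dilR (⇑Φ) (μ + γ) (x - y1 - z1, x - y2 - z2) -
              dilR (⇑Φ) (μ + γ) (x - c - z1, x - y2 - z2)| ≤
            C * ((2:ℝ) ^ μ) ^ δ * ((2:ℝ) ^ γ * ℓ) ^ δ * Uk L δ (μ + γ) (x - z1) y1 c *
              (((2:ℝ) ^ (μ + γ)) ^ n *
                (1 + (2:ℝ) ^ (μ + γ) * ‖x - y2 - z2‖) ^ (-L))) ∧
      (∀ (k : ℤ) (y1 c : ESp n), (∫ x : ESp n, Uk L δ k x y1 c) ≤ C) := by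
  have hL0 : 0 < L := lt_of_le_of_lt (Nat.cast_nonneg n) hL
  obtain ⟨C₀, hC₀, h0'⟩ := schwartz_decay_prod Φ hL0 0
  obtain ⟨C₁, hC₁, h1'⟩ := schwartz_decay_prod Φ hL0 1
  have h0 : ∀ w : PSp n, |Φ w| ≤ C₀ * ((1 + ‖w.1‖) ^ (-L) * (1 + ‖w.2‖) ^ (-L)) := by
    intro w
    have := h0' w
    rwa [norm_iteratedFDeriv_zero, Real.norm_eq_abs] at this
  have h1 : ∀ w : PSp n, ‖fderiv ℝ (⇑Φ) w‖ ≤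
      C₁ * ((1 + ‖w.1‖) ^ (-L) * (1 + ‖w.2‖) ^ (-L)) := by
    intro w
    have := h1' w
    rwa [← norm_iteratedFDeriv_fderiv, norm_iteratedFDeriv_zero] at this
  have hI0 : 0 ≤ ∫ u : ESp n, (1 + ‖u‖) ^ (-L) :=
    integral_nonneg fun u => Real.rpow_nonneg (by positivity) _
  set I : ℝ := ∫ u : ESp n, (1 + ‖u‖) ^ (-L) with hI_def
  set Cp1 : ℝ := C₁ ^ δ * C₀ ^ (1-δ) * Real.sqrt n ^ δ with hCp1_def
  set Cp2 : ℝ := δ * I + (1-δ) * (2*I) with hCp2_def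
  have hCp1_0 : 0 ≤ Cp1 :=
    mul_nonneg (mul_nonneg (Real.rpow_nonneg hC₁ _) (Real.rpow_nonneg hC₀ _))
      (Real.rpow_nonneg (Real.sqrt_nonneg _) _)
  have hCp2_0 : 0 ≤ Cp2 :=
    add_nonneg (mul_nonneg hδ0.le hI0) (mul_nonneg (by linarith) (by linarith))
  have hCpos : 0 < max Cp1 Cp2 + 1 := by
    have := le_max_left Cp1 Cp2
    linarith
  refine ⟨max Cp1 Cp2 + 1, hCpos, ?_, ?_⟩
  · -- the pointwise estimate
    intro γ μ hμ c ℓ hℓ y1 hy1 x z1 y2 z2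
    obtain ⟨hA, hB⟩ := key_est Φ hL0 hC₀ hC₁ h0 h1 (μ + γ) y1 c (x - z1) (x - y2 - z2)
    rw [sub_right_comm x z1 y1, sub_right_comm x z1 c] at hA hB
    have hs : (0:ℝ) < (2:ℝ)^(μ + γ) := by positivity
    have hGpos : 0 < ((2:ℝ)^(μ+γ))^n * (1 + (2:ℝ)^(μ+γ) * ‖x - y2 - z2‖)^(-L) :=
      mul_pos (by positivity) (Real.rpow_pos_of_pos (by positivity) _)
    have hV0 : 0 ≤ Vk L (μ+γ) (x - z1) y1 c := vk_nonneg L (μ+γ) (x - z1) y1 c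
    have hW0 : 0 ≤ Wk L (μ+γ) (x - z1) y1 c := wk_nonneg L (μ+γ) (x - z1) y1 c
    have he0 : 0 ≤ (2:ℝ)^(μ+γ) * ‖y1 - c‖ := mul_nonneg hs.le (norm_nonneg _)
    have hA0 : 0 ≤ C₁ * ((2:ℝ)^(μ+γ) * ‖y1 - c‖) * Vk L (μ+γ) (x - z1) y1 c *
        (((2:ℝ)^(μ+γ))^n * (1 + (2:ℝ)^(μ+γ) * ‖x - y2 - z2‖)^(-L)) :=
      mul_nonneg (mul_nonneg (mul_nonneg hC₁ he0) hV0) hGpos.le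
    have hB0 : 0 ≤ C₀ * Wk L (μ+γ) (x - z1) y1 c *
        (((2:ℝ)^(μ+γ))^n * (1 + (2:ℝ)^(μ+γ) * ‖x - y2 - z2‖)^(-L)) :=
      mul_nonneg (mul_nonneg hC₀ hW0) hGpos.le
    have hinterp := interp_bound hA0 hB0 hδ0.le hδ1.le hA hB
    rw [rpow_comb hC₁ he0 hV0 hW0 hGpos hC₀] at hinterp
    -- bound the distance factor
    have hnorm : ‖y1 - c‖ ≤ Real.sqrt n * ℓ := cube_norm_le hℓ.le hy1
    have hsplit : (2:ℝ)^(μ+γ) = (2:ℝ)^μ * (2:ℝ)^γ :=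
      zpow_add₀ (by norm_num : (2:ℝ) ≠ 0) μ γ
    have h2μ : (0:ℝ) < (2:ℝ)^μ := by positivity
    have h2γ : (0:ℝ) < (2:ℝ)^γ := by positivity
    have hele : C₁ * ((2:ℝ)^(μ+γ) * ‖y1 - c‖) ≤
        C₁ * ((2:ℝ)^μ * (((2:ℝ)^γ * ℓ) * Real.sqrt n)) := by
      refine mul_le_mul_of_nonneg_left ?_ hC₁
      calc (2:ℝ)^(μ+γ) * ‖y1 - c‖ ≤ (2:ℝ)^(μ+γ) * (Real.sqrt n * ℓ) :=
            mul_le_mul_of_nonneg_left hnorm hs.le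
        _ = (2:ℝ)^μ * (((2:ℝ)^γ * ℓ) * Real.sqrt n) := by rw [hsplit]; ring
    have hpow : (C₁ * ((2:ℝ)^(μ+γ) * ‖y1 - c‖)) ^ δ ≤
        C₁ ^ δ * (((2:ℝ)^μ) ^ δ * (((2:ℝ)^γ * ℓ) ^ δ * Real.sqrt n ^ δ)) := by
      calc (C₁ * ((2:ℝ)^(μ+γ) * ‖y1 - c‖)) ^ δ
          ≤ (C₁ * ((2:ℝ)^μ * (((2:ℝ)^γ * ℓ) * Real.sqrt n))) ^ δ :=
            Real.rpow_le_rpow (mul_nonneg hC₁ he0) hele hδ0.le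
        _ = C₁ ^ δ * (((2:ℝ)^μ) ^ δ * (((2:ℝ)^γ * ℓ) ^ δ * Real.sqrt n ^ δ)) := by
            rw [Real.mul_rpow hC₁ (by positivity), Real.mul_rpow h2μ.le (by positivity),
              Real.mul_rpow (by positivity) (Real.sqrt_nonneg _)]
    have hUk : Uk L δ (μ+γ) (x - z1) y1 c
        = Vk L (μ+γ) (x - z1) y1 c ^ δ * Wk L (μ+γ) (x - z1) y1 c ^ (1 - δ) := rfl
    have hrest0 : 0 ≤ C₀ ^ (1-δ) *
        (Vk L (μ+γ) (x - z1) y1 c ^ δ * Wk L (μ+γ) (x - z1) y1 c ^ (1-δ)) *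
        (((2:ℝ)^(μ+γ))^n * (1 + (2:ℝ)^(μ+γ) * ‖x - y2 - z2‖)^(-L)) :=
      mul_nonneg (mul_nonneg (Real.rpow_nonneg hC₀ _)
        (mul_nonneg (Real.rpow_nonneg hV0 _) (Real.rpow_nonneg hW0 _))) hGpos.le
    calc |dilR (⇑Φ) (μ+γ) (x - y1 - z1, x - y2 - z2) -
          dilR (⇑Φ) (μ+γ) (x - c - z1, x - y2 - z2)|
        ≤ (C₁ * ((2:ℝ)^(μ+γ) * ‖y1 - c‖)) ^ δ * C₀ ^ (1-δ) *
            (Vk L (μ+γ) (x - z1) y1 c ^ δ * Wk L (μ+γ) (x - z1) y1 c ^ (1-δ)) *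
            (((2:ℝ)^(μ+γ))^n * (1 + (2:ℝ)^(μ+γ) * ‖x - y2 - z2‖)^(-L)) := hinterp
      _ = (C₁ * ((2:ℝ)^(μ+γ) * ‖y1 - c‖)) ^ δ * (C₀ ^ (1-δ) *
            (Vk L (μ+γ) (x - z1) y1 c ^ δ * Wk L (μ+γ) (x - z1) y1 c ^ (1-δ)) *
            (((2:ℝ)^(μ+γ))^n * (1 + (2:ℝ)^(μ+γ) * ‖x - y2 - z2‖)^(-L))) := by ring
      _ ≤ (C₁ ^ δ * (((2:ℝ)^μ) ^ δ * (((2:ℝ)^γ * ℓ) ^ δ * Real.sqrt n ^ δ))) *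
            (C₀ ^ (1-δ) *
            (Vk L (μ+γ) (x - z1) y1 c ^ δ * Wk L (μ+γ) (x - z1) y1 c ^ (1-δ)) *
            (((2:ℝ)^(μ+γ))^n * (1 + (2:ℝ)^(μ+γ) * ‖x - y2 - z2‖)^(-L))) :=
          mul_le_mul_of_nonneg_right hpow hrest0
      _ = Cp1 * ((2:ℝ)^μ) ^ δ * (((2:ℝ)^γ * ℓ) ^ δ *
            ((Vk L (μ+γ) (x - z1) y1 c ^ δ * Wk L (μ+γ) (x - z1) y1 c ^ (1-δ)) *
            (((2:ℝ)^(μ+γ))^n * (1 + (2:ℝ)^(μ+γ) * ‖x - y2 - z2‖)^(-L)))) := by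
          rw [hCp1_def]; ring
      _ ≤ (max Cp1 Cp2 + 1) * ((2:ℝ)^μ) ^ δ * (((2:ℝ)^γ * ℓ) ^ δ *
            ((Vk L (μ+γ) (x - z1) y1 c ^ δ * Wk L (μ+γ) (x - z1) y1 c ^ (1-δ)) *
            (((2:ℝ)^(μ+γ))^n * (1 + (2:ℝ)^(μ+γ) * ‖x - y2 - z2‖)^(-L)))) := by
          refine mul_le_mul_of_nonneg_right ?_ ?_
          · refine mul_le_mul_of_nonneg_right ?_ (Real.rpow_nonneg h2μ.le _)
            have := le_max_left Cp1 Cp2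
            linarith
          · exact mul_nonneg (Real.rpow_nonneg (by positivity) _)
              (mul_nonneg (mul_nonneg (Real.rpow_nonneg hV0 _)
                (Real.rpow_nonneg hW0 _)) hGpos.le)
      _ = (max Cp1 Cp2 + 1) * ((2:ℝ)^μ) ^ δ * ((2:ℝ)^γ * ℓ) ^ δ *
            Uk L δ (μ+γ) (x - z1) y1 c *
            (((2:ℝ)^(μ+γ))^n * (1 + (2:ℝ)^(μ+γ) * ‖x - y2 - z2‖)^(-L)) := by
          rw [hUk]; ring
  · -- the L¹ bound
    intro k y1 c
    obtain ⟨hVint, hVle⟩ := vk_int hL hL0 k y1 c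
    obtain ⟨hW1i, hW1e⟩ := integrable_integral_scaled hL k y1
    obtain ⟨hW2i, hW2e⟩ := integrable_integral_scaled hL k c
    have hWfun : (fun x : ESp n => Wk L k x y1 c)
        = fun x : ESp n => ((2:ℝ)^k)^n * (1 + (2:ℝ)^k * ‖x - y1‖) ^ (-L)
          + ((2:ℝ)^k)^n * (1 + (2:ℝ)^k * ‖x - c‖) ^ (-L) := rfl
    have hWint : Integrable (fun x : ESp n => Wk L k x y1 c) := by
      rw [hWfun]; exact hW1i.add hW2i
    have hWeq : ∫ x : ESp n, Wk L k x y1 c = 2 * I := by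
      rw [hWfun, integral_add hW1i hW2i, hW1e, hW2e, ← hI_def]; ring
    have hpt : ∀ x : ESp n, Uk L δ k x y1 c ≤
        δ * Vk L k x y1 c + (1-δ) * Wk L k x y1 c := fun x =>
      Real.geom_mean_le_arith_mean2_weighted hδ0.le (by linarith)
        (vk_nonneg L k x y1 c) (wk_nonneg L k x y1 c) (by ring)
    have hRint : Integrable (fun x : ESp n =>
        δ * Vk L k x y1 c + (1-δ) * Wk L k x y1 c) :=
      (hVint.const_mul δ).add (hWint.const_mul (1-δ))
    calc ∫ x : ESp n, Uk L δ k x y1 c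
        ≤ ∫ x : ESp n, (δ * Vk L k x y1 c + (1-δ) * Wk L k x y1 c) :=
          integral_mono_of_nonneg (ae_of_all _ fun x => uk_nonneg L δ k x y1 c)
            hRint (ae_of_all _ hpt)
      _ = δ * (∫ x : ESp n, Vk L k x y1 c) + (1-δ) * (∫ x : ESp n, Wk L k x y1 c) := by
          rw [integral_add (hVint.const_mul δ) (hWint.const_mul (1-δ)),
            integral_const_mul, integral_const_mul]
      _ ≤ δ * I + (1-δ) * (2*I) := by
          rw [hWeq]
          have h1 : δ * (∫ x : ESp n, Vk L k x y1 c) ≤ δ * I :=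
            mul_le_mul_of_nonneg_left hVle hδ0.le
          linarith
      _ ≤ max Cp1 Cp2 + 1 := by
          have h2 := le_max_right Cp1 Cp2
          rw [hCp2_def] at h2
          linarith
end
end
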